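/- arXiv:1212.3850 — 2 statements merged into one kernel-verified Lean document; each statement's English description precedes it below -/
import Mathlib

section
/- Let N ∈ R^{m×m} be an entrywise nonnegative matrix with N^ℓ = 0, let v ∈ R^m be a nonnegative vector, and suppose a sequence of nonnegative vectors (e^t) satisfies e^{t+1} ≤ N·((1/(t+1))·∑_{τ=1}^{t} e^τ) + N·g + T^{t+1} entrywise, where g is a fixed nonnegative vector and (T^t) are nonnegative vectors. Then e^{t+1} ≤ ∑_{s=0}^{ℓ−1} N^s · T_s^{t+1} + N·(I − N)^{-1}·g entrywise, where T_0^{t+1} = T^{t+1} and T_s^{t+1} = (1/(t+1))·∑_{τ=1}^{t} T_{s−1}^{τ}. -/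
open Finset

/-- Iterated averaging of a sequence of vectors. -/
noncomputable def Eit {n : Type*} (e : ℕ → n → ℝ) : ℕ → ℕ → n → ℝ
  | 0, t => e t
  | _ + 1, 0 => 0
  | s + 1, t + 1 => (1 / ((t : ℝ) + 1)) • ∑ τ ∈ Finset.Icc 1 t, Eit e s τ

private lemma mulVec_nonneg' {n : Type*} [Fintype n] (M : Matrix n n ℝ)
    (hM : ∀ i j, 0 ≤ M i j) (x : n → ℝ) (hx : ∀ i, 0 ≤ x i) :
    ∀ i, 0 ≤ M.mulVec x i := by
  intro i
  simp only [Matrix.mulVec, dotProduct]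
  exact Finset.sum_nonneg fun j _ => mul_nonneg (hM i j) (hx j)

private lemma mulVec_mono' {n : Type*} [Fintype n] (M : Matrix n n ℝ)
    (hM : ∀ i j, 0 ≤ M i j) (x y : n → ℝ) (hxy : ∀ i, x i ≤ y i) :
    ∀ i, M.mulVec x i ≤ M.mulVec y i := by
  intro i
  simp only [Matrix.mulVec, dotProduct]
  exact Finset.sum_le_sum fun j _ => mul_le_mul_of_nonneg_left (hxy j) (hM i j)

private lemma pow_entry_nonneg' {n : Type*} [Fintype n] [DecidableEq n]
    (M : Matrix n n ℝ) (hM : ∀ i j, 0 ≤ M i j) :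
    ∀ s i j, 0 ≤ (M ^ s) i j := by
  intro s
  induction s with
  | zero =>
    intro i j
    simp only [pow_zero, Matrix.one_apply]
    split <;> norm_num
  | succ s ih =>
    intro i j
    rw [pow_succ, Matrix.mul_apply]
    exact Finset.sum_nonneg fun k _ => mul_nonneg (ih i k) (hM k j)

private lemma mulVec_finset_sum {n : Type*} [Fintype n] (M : Matrix n n ℝ)
    {ι : Type*} (s : Finset ι) (f : ι → n → ℝ) :
    M.mulVec (∑ τ ∈ s, f τ) = ∑ τ ∈ s, M.mulVec (f τ) := by
  ext i
  simp only [Matrix.mulVec, dotProduct, Finset.sum_apply, Finset.mul_sum]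
  exact Finset.sum_comm

private lemma sum_mulVec' {n : Type*} [Fintype n] {ι : Type*} (s : Finset ι)
    (M : ι → Matrix n n ℝ) (g : n → ℝ) (i : n) :
    (∑ τ ∈ s, M τ).mulVec g i = ∑ τ ∈ s, (M τ).mulVec g i := by
  simp only [Matrix.mulVec, dotProduct, Matrix.sum_apply, Finset.sum_mul]
  exact Finset.sum_comm

theorem stmt_7 {n : Type*} [Fintype n] [DecidableEq n]
    (N : Matrix n n ℝ) (ℓ : ℕ) (hℓ : 0 < ℓ)
    (hNnn : ∀ i j, 0 ≤ N i j) (hNnil : N ^ ℓ = 0)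
    (g : n → ℝ) (hg : ∀ i, 0 ≤ g i)
    (e : ℕ → n → ℝ) (he : ∀ t i, 0 ≤ e t i)
    (T : ℕ → n → ℝ) (hT : ∀ t i, 0 ≤ T t i)
    (Ts : ℕ → ℕ → n → ℝ)
    (hTs0 : ∀ t, Ts 0 t = T t)
    (hTsrec : ∀ s t : ℕ,
      Ts (s + 1) (t + 1) = (1 / ((t : ℝ) + 1)) • ∑ τ ∈ Finset.Icc 1 t, Ts s τ)
    (hrec : ∀ t : ℕ, ∀ i,
      e (t + 1) i ≤
        N.mulVec ((1 / ((t : ℝ) + 1)) • ∑ τ ∈ Finset.Icc 1 t, e τ) i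
          + N.mulVec g i + T (t + 1) i) :
    ∀ t : ℕ, ∀ i,
      e (t + 1) i ≤
        (∑ s ∈ Finset.range ℓ, (N ^ s).mulVec (Ts s (t + 1))) i
          + (N * (1 - N)⁻¹).mulVec g i := by
  set E := Eit e with hE
  have hNg : ∀ i, 0 ≤ N.mulVec g i := mulVec_nonneg' N hNnn g hg
  -- key "one-step" inequality, iterated
  have hD : ∀ s t : ℕ, ∀ i,
      E s (t + 1) i ≤ N.mulVec (E (s + 1) (t + 1)) i + N.mulVec g i + Ts s (t + 1) i := by
    intro s
    induction s with
    | zero =>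
      intro t i
      have := hrec t i
      rw [hTs0]
      simpa [hE, Eit] using this
    | succ s ih =>
      intro t i
      have hEdef : E (s + 1) (t + 1) = (1 / ((t : ℝ) + 1)) • ∑ τ ∈ Finset.Icc 1 t, E s τ := rfl
      have hEdef2 : E (s + 2) (t + 1) = (1 / ((t : ℝ) + 1)) • ∑ τ ∈ Finset.Icc 1 t, E (s + 1) τ := rfl
      set c : ℝ := 1 / ((t : ℝ) + 1) with hc
      have hc0 : 0 ≤ c := by positivity
      have hsum : ∑ τ ∈ Finset.Icc 1 t, E s τ i
          ≤ ∑ τ ∈ Finset.Icc 1 t,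
              (N.mulVec (E (s + 1) τ) i + N.mulVec g i + Ts s τ i) := by
        refine Finset.sum_le_sum fun τ hτ => ?_
        have h1 : 1 ≤ τ := (Finset.mem_Icc.mp hτ).1
        obtain ⟨τ', rfl⟩ : ∃ τ', τ = τ' + 1 :=
          ⟨τ - 1, (Nat.succ_pred_eq_of_pos h1).symm⟩
        exact ih τ' i
      have hL : E (s + 1) (t + 1) i = c * ∑ τ ∈ Finset.Icc 1 t, E s τ i := by
        rw [hEdef]
        simp [Finset.sum_apply]
      have step1 : E (s + 1) (t + 1) i
          ≤ c * ∑ τ ∈ Finset.Icc 1 t,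
              (N.mulVec (E (s + 1) τ) i + N.mulVec g i + Ts s τ i) := by
        rw [hL]
        exact mul_le_mul_of_nonneg_left hsum hc0
      rw [Finset.sum_add_distrib, Finset.sum_add_distrib, mul_add, mul_add] at step1
      have hA : c * ∑ τ ∈ Finset.Icc 1 t, N.mulVec (E (s + 1) τ) i
          = N.mulVec (E (s + 2) (t + 1)) i := by
        rw [hEdef2, Matrix.mulVec_smul, mulVec_finset_sum]
        simp [Finset.sum_apply]
      have hB : c * ∑ τ ∈ Finset.Icc 1 t, N.mulVec g i ≤ N.mulVec g i := by
        rw [Finset.sum_const, Nat.card_Icc]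
        simp only [nsmul_eq_mul]
        have hct : c * (t : ℝ) ≤ 1 := by
          rw [hc]
          rw [div_mul_eq_mul_div, div_le_one (by positivity)]
          linarith
        calc c * ((t + 1 - 1 : ℕ) * N.mulVec g i)
            = (c * (t : ℝ)) * N.mulVec g i := by push_cast; ring
          _ ≤ 1 * N.mulVec g i := mul_le_mul_of_nonneg_right hct (hNg i)
          _ = N.mulVec g i := one_mul _
      have hC : c * ∑ τ ∈ Finset.Icc 1 t, Ts s τ i = Ts (s + 1) (t + 1) i := by
        rw [hTsrec s t, hc]
        simp only [Pi.smul_apply, Finset.sum_apply, smul_eq_mul]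
      calc E (s + 1) (t + 1) i
          ≤ c * ∑ τ ∈ Finset.Icc 1 t, N.mulVec (E (s + 1) τ) i
              + c * ∑ τ ∈ Finset.Icc 1 t, N.mulVec g i
              + c * ∑ τ ∈ Finset.Icc 1 t, Ts s τ i := step1
        _ ≤ N.mulVec (E (s + 2) (t + 1)) i + N.mulVec g i + Ts (s + 1) (t + 1) i := by
            rw [hA, hC]
            exact add_le_add_left (add_le_add_right hB _) _
  -- unrolled inequality
  have hCk : ∀ k t : ℕ, ∀ i,
      e (t + 1) i ≤ (∑ s ∈ Finset.range k, (N ^ s).mulVec (Ts s (t + 1))) i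
        + (∑ s ∈ Finset.range k, (N ^ (s + 1)).mulVec g) i
        + (N ^ k).mulVec (E k (t + 1)) i := by
    intro k
    induction k with
    | zero =>
      intro t i
      simp [hE, Eit, Matrix.one_mulVec]
    | succ k ih =>
      intro t i
      have hbound : ∀ j, (N ^ k).mulVec (E k (t + 1)) j
          ≤ (N ^ (k + 1)).mulVec (E (k + 1) (t + 1)) j
            + (N ^ (k + 1)).mulVec g j + (N ^ k).mulVec (Ts k (t + 1)) j := by
        intro j
        have hm := mulVec_mono' (N ^ k) (pow_entry_nonneg' N hNnn k)
          (E k (t + 1))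
          (fun i => N.mulVec (E (k + 1) (t + 1)) i + N.mulVec g i + Ts k (t + 1) i)
          (fun i => hD k t i) j
        have heq : (N ^ k).mulVec
            (fun i => N.mulVec (E (k + 1) (t + 1)) i + N.mulVec g i + Ts k (t + 1) i) j
            = (N ^ (k + 1)).mulVec (E (k + 1) (t + 1)) j
              + (N ^ (k + 1)).mulVec g j + (N ^ k).mulVec (Ts k (t + 1)) j := by
          have : (fun i => N.mulVec (E (k + 1) (t + 1)) i + N.mulVec g i + Ts k (t + 1) i)
              = N.mulVec (E (k + 1) (t + 1)) + N.mulVec g + Ts k (t + 1) := rfl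
          rw [this, Matrix.mulVec_add, Matrix.mulVec_add, Matrix.mulVec_mulVec,
            Matrix.mulVec_mulVec, ← pow_succ]
          simp
        exact heq ▸ hm
      calc e (t + 1) i
          ≤ (∑ s ∈ Finset.range k, (N ^ s).mulVec (Ts s (t + 1))) i
            + (∑ s ∈ Finset.range k, (N ^ (s + 1)).mulVec g) i
            + (N ^ k).mulVec (E k (t + 1)) i := ih t i
        _ ≤ (∑ s ∈ Finset.range k, (N ^ s).mulVec (Ts s (t + 1))) i
            + (∑ s ∈ Finset.range k, (N ^ (s + 1)).mulVec g) i
            + ((N ^ (k + 1)).mulVec (E (k + 1) (t + 1)) i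
              + (N ^ (k + 1)).mulVec g i + (N ^ k).mulVec (Ts k (t + 1)) i) := by
            exact add_le_add_right (hbound i) _
        _ = (∑ s ∈ Finset.range (k + 1), (N ^ s).mulVec (Ts s (t + 1))) i
            + (∑ s ∈ Finset.range (k + 1), (N ^ (s + 1)).mulVec g) i
            + (N ^ (k + 1)).mulVec (E (k + 1) (t + 1)) i := by
            rw [Finset.sum_range_succ, Finset.sum_range_succ]
            simp only [Finset.sum_apply, Pi.add_apply]
            ring
  -- geometric series identity
  have hinv : (1 - N)⁻¹ = ∑ s ∈ Finset.range ℓ, N ^ s := by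
    apply Matrix.inv_eq_left_inv
    have h := geom_sum_mul N ℓ
    rw [hNnil, zero_sub, mul_sub, mul_one] at h
    rw [mul_sub, mul_one, ← neg_sub, h, neg_neg]
  have hgeo : N * (1 - N)⁻¹ = ∑ s ∈ Finset.range ℓ, N ^ (s + 1) := by
    rw [hinv, Finset.mul_sum]
    exact Finset.sum_congr rfl fun s _ => (pow_succ' N s).symm
  intro t i
  have := hCk ℓ t i
  rw [hNnil, Matrix.zero_mulVec] at this
  calc e (t + 1) i
      ≤ (∑ s ∈ Finset.range ℓ, (N ^ s).mulVec (Ts s (t + 1))) i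
        + (∑ s ∈ Finset.range ℓ, (N ^ (s + 1)).mulVec g) i + 0 := this
    _ = (∑ s ∈ Finset.range ℓ, (N ^ s).mulVec (Ts s (t + 1))) i
        + (N * (1 - N)⁻¹).mulVec g i := by
        rw [add_zero, hgeo, sum_mulVec']; simp [Finset.sum_apply]
end

section
/- Suppose nonnegative vectors T_s^{t+1} are defined recursively by T_0^{t+1} ≤ v/(t+1) (entrywise, for a fixed nonnegative vector v and all t ≥ 0) and T_s^{t+1} = (1/(t+1))·∑_{τ=1}^{t} T_{s−1}^{τ}. Then for all s ≥ 0 and t ≥ 0, T_s^{t+1} ≤ (v/(t+1))·∑_{u=0}^{s} (log(t+1))^u/u! entrywise. -/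
noncomputable def ggAux (s : ℕ) (x : ℝ) : ℝ :=
  ∑ u ∈ Finset.range (s + 1), (Real.log x) ^ u / (Nat.factorial u : ℝ)

lemma ggAux_one (s : ℕ) : ggAux s 1 = 1 := by
  rw [ggAux, Real.log_one]
  rw [Finset.sum_eq_single 0]
  · simp
  · intro u _ hu
    rw [zero_pow hu, zero_div]
  · intro h
    exact absurd (Finset.mem_range.mpr (by omega)) h

lemma ggAux_mono (s : ℕ) {a b : ℝ} (ha : 1 ≤ a) (hab : a ≤ b) :
    ggAux s a ≤ ggAux s b := by
  apply Finset.sum_le_sum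
  intro u _
  have h1 : (0:ℝ) ≤ Real.log a := Real.log_nonneg ha
  have h2 : Real.log a ≤ Real.log b :=
    Real.log_le_log (lt_of_lt_of_le zero_lt_one ha) hab
  gcongr

lemma ggAux_hasDerivAt (s : ℕ) {x : ℝ} (hx : 0 < x) :
    HasDerivAt (ggAux s)
      ((∑ u ∈ Finset.range s, Real.log x ^ u / (Nat.factorial u : ℝ)) / x) x := by
  have h : ∀ u ∈ Finset.range (s+1),
      HasDerivAt (fun y => (Real.log y) ^ u / (Nat.factorial u : ℝ))
        (((u : ℝ) * Real.log x ^ (u-1) * x⁻¹) / (Nat.factorial u : ℝ)) x := by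
    intro u _
    exact ((Real.hasDerivAt_log hx.ne').pow u).div_const _
  have h2 := HasDerivAt.sum h
  convert h2 using 1
  · rfl
  · rfl
  · funext y; simp [ggAux, Finset.sum_apply]
  rw [Finset.sum_div, Finset.sum_range_succ']
  have hterm : ∀ u : ℕ, Real.log x ^ u / (Nat.factorial u : ℝ) / x
      = (((u+1 : ℕ) : ℝ) * Real.log x ^ ((u+1)-1) * x⁻¹) / (Nat.factorial (u+1) : ℝ) := by
    intro u
    have hu : (Nat.factorial u : ℝ) ≠ 0 := Nat.cast_ne_zero.mpr u.factorial_ne_zero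
    rw [Nat.factorial_succ, Nat.add_sub_cancel]
    push_cast
    field_simp
  simp only [hterm]
  simp

/-- derivative of `ggAux (s+1)` is `ggAux s x / x`. -/
lemma ggAux_succ_hasDerivAt (s : ℕ) {x : ℝ} (hx : 0 < x) :
    HasDerivAt (ggAux (s+1)) (ggAux s x / x) x :=
  ggAux_hasDerivAt (s+1) hx

/-- derivative of `x ↦ ggAux s x / x`. -/
lemma ggAux_div_hasDerivAt (s : ℕ) {x : ℝ} (hx : 0 < x) :
    HasDerivAt (fun y => ggAux s y / y)
      (-(Real.log x ^ s / (Nat.factorial s : ℝ)) / x ^ 2) x := by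
  have h := (ggAux_hasDerivAt s hx).div (hasDerivAt_id x) hx.ne'
  convert h using 1
  · rfl
  · rfl
  · rfl
  have hsum : ggAux s x = (∑ u ∈ Finset.range s, Real.log x ^ u / (Nat.factorial u : ℝ))
      + Real.log x ^ s / (Nat.factorial s : ℝ) := by
    rw [ggAux, Finset.sum_range_succ]
  rw [hsum]
  simp only [id]
  field_simp
  ring

lemma ggAux_div_antitone (s : ℕ) {a b : ℝ} (ha : 1 ≤ a) (hab : a ≤ b) :
    ggAux s b / b ≤ ggAux s a / a := by
  rcases eq_or_lt_of_le hab with rfl | hlt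
  · exact le_refl _
  have hpos : ∀ x ∈ Set.Icc a b, (0:ℝ) < x :=
    fun x hx => lt_of_lt_of_le zero_lt_one (ha.trans hx.1)
  obtain ⟨c, hc, hceq⟩ := exists_hasDerivAt_eq_slope (fun y => ggAux s y / y)
    (fun x => -(Real.log x ^ s / (Nat.factorial s : ℝ)) / x ^ 2) hlt
    (fun x hx => (ggAux_div_hasDerivAt s (hpos x hx)).continuousAt.continuousWithinAt)
    (fun x hx => ggAux_div_hasDerivAt s (lt_of_lt_of_le zero_lt_one (ha.trans hx.1.le)))
  have hc1 : (1:ℝ) ≤ c := ha.trans hc.1.le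
  have hlog : 0 ≤ Real.log c := Real.log_nonneg hc1
  have hder : -(Real.log c ^ s / (Nat.factorial s : ℝ)) / c ^ 2 ≤ 0 := by
    apply div_nonpos_of_nonpos_of_nonneg
    · simp only [neg_nonpos]; positivity
    · positivity
  rw [hceq] at hder
  have hba : 0 < b - a := by linarith
  rcases div_nonpos_iff.mp hder with ⟨_, h2⟩ | ⟨h1, _⟩
  · linarith
  · linarith

/-- key telescoping step via MVT. -/
lemma ggAux_step (s : ℕ) {a : ℝ} (ha : 1 ≤ a) :
    ggAux s (a+1) / (a+1) ≤ ggAux (s+1) (a+1) - ggAux (s+1) a := by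
  have hlt : a < a + 1 := by linarith
  have hpos : ∀ x ∈ Set.Icc a (a+1), (0:ℝ) < x :=
    fun x hx => lt_of_lt_of_le zero_lt_one (ha.trans hx.1)
  obtain ⟨c, hc, hceq⟩ := exists_hasDerivAt_eq_slope (ggAux (s+1))
    (fun x => ggAux s x / x) hlt
    (fun x hx => (ggAux_succ_hasDerivAt s (hpos x hx)).continuousAt.continuousWithinAt)
    (fun x hx => ggAux_succ_hasDerivAt s (lt_of_lt_of_le zero_lt_one (ha.trans hx.1.le)))
  have hc1 : (1:ℝ) ≤ c := ha.trans hc.1.le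
  have hmono : ggAux s (a+1) / (a+1) ≤ ggAux s c / c :=
    ggAux_div_antitone s hc1 hc.2.le
  rw [hceq] at hmono
  simpa using hmono

lemma ggAux_harmonic' (s : ℕ) : ∀ t : ℕ, 1 ≤ t →
    ∑ τ ∈ Finset.Icc 1 t, ggAux s (τ:ℝ) / (τ:ℝ) ≤ ggAux (s+1) (t:ℝ) := by
  intro t
  induction t with
  | zero => omega
  | succ t ih =>
    intro _
    rcases Nat.eq_zero_or_pos t with rfl | hpos
    · simp [ggAux_one]
    rw [Finset.sum_Icc_succ_top (by omega : 1 ≤ t + 1)]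
    have h1t : (1:ℝ) ≤ (t:ℝ) := by exact_mod_cast hpos
    have hstep := ggAux_step s h1t
    have hih := ih hpos
    push_cast
    linarith

lemma ggAux_harmonic (s : ℕ) (t : ℕ) :
    ∑ τ ∈ Finset.Icc 1 t, ggAux s (τ:ℝ) / (τ:ℝ) ≤ ggAux (s+1) ((t:ℝ)+1) := by
  rcases Nat.eq_zero_or_pos t with rfl | hpos
  · rw [show Finset.Icc 1 0 = ∅ from rfl]
    simp only [Finset.sum_empty, Nat.cast_zero, zero_add]
    rw [ggAux_one]
    norm_num
  · have h1t : (1:ℝ) ≤ (t:ℝ) := by exact_mod_cast hpos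
    exact (ggAux_harmonic' s t hpos).trans
      (ggAux_mono (s+1) h1t (by linarith))

theorem stmt_10 {n : Type*} [Fintype n]
    (v : n → ℝ) (hv : ∀ i, 0 ≤ v i)
    (T : ℕ → ℕ → n → ℝ) (hTnn : ∀ s t i, 0 ≤ T s t i)
    (hT0 : ∀ t : ℕ, ∀ i, T 0 (t + 1) i ≤ v i / ((t : ℝ) + 1))
    (hTrec : ∀ s t : ℕ,
      T (s + 1) (t + 1) = (1 / ((t : ℝ) + 1)) • ∑ τ ∈ Finset.Icc 1 t, T s τ) :
    ∀ s t : ℕ, ∀ i,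
      T s (t + 1) i ≤
        (v i / ((t : ℝ) + 1)) *
          ∑ u ∈ Finset.range (s + 1), (Real.log ((t : ℝ) + 1)) ^ u / (Nat.factorial u : ℝ) := by
  intro s
  induction s with
  | zero =>
    intro t i
    simpa using hT0 t i
  | succ s ih =>
    intro t i
    have h := congrFun (hTrec s t) i
    simp only [Pi.smul_apply, Finset.sum_apply, smul_eq_mul] at h
    have hb : ∑ τ ∈ Finset.Icc 1 t, T s τ i
        ≤ v i * ∑ τ ∈ Finset.Icc 1 t, ggAux s (τ:ℝ) / (τ:ℝ) := by
      rw [Finset.mul_sum]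
      apply Finset.sum_le_sum
      intro τ hτ
      have h1τ : 1 ≤ τ := (Finset.mem_Icc.mp hτ).1
      obtain ⟨τ', rfl⟩ : ∃ τ', τ = τ' + 1 := ⟨τ - 1, by omega⟩
      have hih := ih τ' i
      have hc : ((τ' + 1 : ℕ) : ℝ) = (τ' : ℝ) + 1 := by push_cast; ring
      rw [hc]
      calc T s (τ'+1) i ≤ v i / ((τ':ℝ)+1) *
            ∑ u ∈ Finset.range (s + 1),
              (Real.log ((τ':ℝ) + 1)) ^ u / (Nat.factorial u : ℝ) := hih
        _ = v i * (ggAux s ((τ':ℝ)+1) / ((τ':ℝ)+1)) := by rw [ggAux]; ring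
    calc T (s+1) (t+1) i = 1/((t:ℝ)+1) * ∑ τ ∈ Finset.Icc 1 t, T s τ i := h
      _ ≤ 1/((t:ℝ)+1) * (v i * ggAux (s+1) ((t:ℝ)+1)) := by
          apply mul_le_mul_of_nonneg_left _ (by positivity)
          exact hb.trans (mul_le_mul_of_nonneg_left (ggAux_harmonic s t) (hv i))
      _ = (v i / ((t:ℝ)+1)) *
            ∑ u ∈ Finset.range (s + 1 + 1),
              (Real.log ((t:ℝ) + 1)) ^ u / (Nat.factorial u : ℝ) := by
          rw [ggAux]; ring
end
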